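/- arXiv:2305.01724 — 3 statements merged into one kernel-verified Lean document; each statement's English description precedes it below -/
import Mathlib

section
/- Let K be a field and let T = (t_{ijk}) be an m×n×r array over K. Suppose the first flattening T₁ (the m×(nr) matrix whose rows are indexed by i) has rank at most u−1 and the second flattening T₂ (the n×(mr) matrix whose rows are indexed by j) has rank at most v−1. Then the third flattening T₃ (the r×(mn) matrix whose rows are indexed by k) has rank at most (u−1)(v−1). -/
open Matrix

/-- If the first flattening of an `m×n×r` array has rank ≤ u−1 and the second flattening has
rank ≤ v−1, then the third flattening has rank ≤ (u−1)(v−1). -/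
theorem stmt_4 {K : Type*} [Field K] (m n r u v : ℕ) (hu : 1 ≤ u) (hv : 1 ≤ v)
    (T : Fin m → Fin n → Fin r → K)
    (h1 : (Matrix.of fun i (p : Fin n × Fin r) => T i p.1 p.2).rank ≤ u - 1)
    (h2 : (Matrix.of fun j (p : Fin m × Fin r) => T p.1 j p.2).rank ≤ v - 1) :
    (Matrix.of fun k (p : Fin m × Fin n) => T p.1 p.2 k).rank ≤ (u - 1) * (v - 1) := by
  classical
  set T₁ : Matrix (Fin m) (Fin n × Fin r) K := Matrix.of fun i (p : Fin n × Fin r) => T i p.1 p.2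
  set T₂ : Matrix (Fin n) (Fin m × Fin r) K := Matrix.of fun j (p : Fin m × Fin r) => T p.1 j p.2
  set T₃ : Matrix (Fin r) (Fin m × Fin n) K := Matrix.of fun k (p : Fin m × Fin n) => T p.1 p.2 k
  set U : Submodule K (Fin m → K) := Submodule.span K (Set.range T₁ᵀ) with hUdef
  set V : Submodule K (Fin n → K) := Submodule.span K (Set.range T₂ᵀ) with hVdef
  have hU : Module.finrank K U ≤ u - 1 := by
    rw [hUdef]; rw [Matrix.rank_eq_finrank_span_cols] at h1; exact h1
  have hV : Module.finrank K V ≤ v - 1 := by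
    rw [hVdef]; rw [Matrix.rank_eq_finrank_span_cols] at h2; exact h2
  let bU := Module.finBasis K U
  let bV := Module.finBasis K V
  have hext : ∀ s, ∃ g : (Fin m → K) →ₗ[K] K, g.comp U.subtype = bU.coord s :=
    fun s => LinearMap.exists_extend _
  choose ψ hψ using hext
  have colmem : ∀ (j : Fin n) (k : Fin r), (fun i => T i j k) ∈ U := fun j k =>
    Submodule.subset_span ⟨(j, k), rfl⟩
  let col : Fin n → Fin r → U := fun j k => ⟨fun i => T i j k, colmem j k⟩
  have hψcoord : ∀ s (x : U), ψ s (x : Fin m → K) = bU.repr x s := by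
    intro s x
    have := LinearMap.congr_fun (hψ s) x
    simpa [Module.Basis.coord_apply] using this
  have key1 : ∀ i j k, T i j k = ∑ s, ψ s ((col j k : Fin m → K)) * (bU s : Fin m → K) i := by
    intro i j k
    have h := congrArg (fun x : U => (x : Fin m → K) i) (bU.sum_repr (col j k)).symm
    simp only [AddSubmonoidClass.coe_finset_sum, SetLike.val_smul, Finset.sum_apply,
      Pi.smul_apply, smul_eq_mul] at h
    calc T i j k = (col j k : Fin m → K) i := rfl
      _ = ∑ s, bU.repr (col j k) s * (bU s : Fin m → K) i := h
      _ = ∑ s, ψ s ((col j k : Fin m → K)) * (bU s : Fin m → K) i :=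
          Finset.sum_congr rfl fun s _ => by rw [← hψcoord s (col j k)]
  have wmem : ∀ s k, (fun j => ψ s ((col j k : Fin m → K))) ∈ V := by
    intro s k
    have heq : (fun j => ψ s ((col j k : Fin m → K)))
        = ∑ i, ψ s ((Pi.single i 1 : Fin m → K)) • (fun j => T i j k) := by
      funext j
      have hc : ((col j k : Fin m → K)) = ∑ i, T i j k • (Pi.single i 1 : Fin m → K) := by
        funext i'
        simp [Finset.sum_apply, Pi.single_apply, Finset.sum_ite_eq, eq_comm]
        rfl
      rw [hc, map_sum]
      simp only [_root_.map_smul, smul_eq_mul, Finset.sum_apply, Pi.smul_apply]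
      exact Finset.sum_congr rfl fun i _ => mul_comm _ _
    rw [heq]
    exact Submodule.sum_mem _ fun i _ =>
      Submodule.smul_mem _ _ (Submodule.subset_span ⟨(i, k), rfl⟩)
  let F : (Fin (Module.finrank K U) × Fin (Module.finrank K V)) → (Fin m × Fin n → K) :=
    fun st p => (bU st.1 : Fin m → K) p.1 * (bV st.2 : Fin n → K) p.2
  have rowmem : ∀ k, T₃ k ∈ Submodule.span K (Set.range F) := by
    intro k
    let w : Fin (Module.finrank K U) → V := fun s => ⟨_, wmem s k⟩
    have hwrepr : ∀ s j, ψ s ((col j k : Fin m → K))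
        = ∑ t, bV.repr (w s) t * (bV t : Fin n → K) j := by
      intro s j
      have h := congrArg (fun x : V => (x : Fin n → K) j) (bV.sum_repr (w s)).symm
      simp only [AddSubmonoidClass.coe_finset_sum, SetLike.val_smul, Finset.sum_apply,
        Pi.smul_apply, smul_eq_mul] at h
      exact h
    have heq : T₃ k = ∑ st : Fin (Module.finrank K U) × Fin (Module.finrank K V),
        bV.repr (w st.1) st.2 • F st := by
      funext p
      have hL : T₃ k p = ∑ s, ∑ t, bV.repr (w s) t *
          ((bU s : Fin m → K) p.1 * (bV t : Fin n → K) p.2) := by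
        calc T₃ k p = T p.1 p.2 k := rfl
          _ = ∑ s, ψ s ((col p.2 k : Fin m → K)) * (bU s : Fin m → K) p.1 := key1 _ _ _
          _ = ∑ s, (∑ t, bV.repr (w s) t * (bV t : Fin n → K) p.2) *
              (bU s : Fin m → K) p.1 := by
              refine Finset.sum_congr rfl fun s _ => ?_
              rw [hwrepr s p.2]
          _ = _ := by
              refine Finset.sum_congr rfl fun s _ => ?_
              rw [Finset.sum_mul]
              exact Finset.sum_congr rfl fun t _ => by ring
      rw [hL, ← Finset.sum_product', Finset.univ_product_univ, Finset.sum_apply]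
      exact Finset.sum_congr rfl fun st _ => rfl
    rw [heq]
    exact Submodule.sum_mem _ fun st _ =>
      Submodule.smul_mem _ _ (Submodule.subset_span ⟨st, rfl⟩)
  rw [Matrix.rank_eq_finrank_span_row]
  have hle : Submodule.span K (Set.range T₃) ≤ Submodule.span K (Set.range F) :=
    Submodule.span_le.mpr (Set.range_subset_iff.mpr rowmem)
  calc Module.finrank K (Submodule.span K (Set.range T₃))
      ≤ Module.finrank K (Submodule.span K (Set.range F)) := Submodule.finrank_mono hle
    _ ≤ Fintype.card (Fin (Module.finrank K U) × Fin (Module.finrank K V)) := by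
        refine (finrank_span_le_card _).trans ?_
        convert Fintype.card_range_le F
        rfl
        rw [Set.toFinset_card]
    _ = Module.finrank K U * Module.finrank K V := by simp
    _ ≤ (u - 1) * (v - 1) := Nat.mul_le_mul hU hV
end

section
/- For any integers m,n,r ≥ 1 and u,v,w ≥ 2 with (u−1)(v−1) > w−1, u ≤ m, v ≤ n, and (u−1)(v−1) ≤ r, there exists an m×n×r array T over a field K such that the first flattening of T has rank u−1, the second flattening has rank v−1, and the third flattening has rank strictly greater than w−1. -/
lemma rank_partialPerm {K : Type*} [Field K] {α β : Type*} [Fintype α] [Fintype β]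
    (M : Matrix α β K) (s : ℕ) (g : Fin s → α) (h : Fin s → β)
    (hMgh : ∀ i j, M (g i) (h j) = if i = j then 1 else 0)
    (hzero : ∀ a, a ∉ Set.range g → M a = 0) :
    M.rank = s := by
  classical
  have hli : LinearIndependent K (M.submatrix g id).row := by
    rw [Fintype.linearIndependent_iff]
    intro c hc j
    have := congrFun hc (h j)
    simpa [Matrix.row, Matrix.submatrix, Finset.sum_apply, hMgh, mul_ite] using this
  have h2 : (M.submatrix g id).rank = s := by
    simpa only [Fintype.card_fin] using hli.rank_matrix
  have hspan : Submodule.span K (Set.range M)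
      = Submodule.span K (Set.range (M.submatrix g id)) := by
    apply le_antisymm
    · rw [Submodule.span_le]
      rintro _ ⟨a, rfl⟩
      by_cases ha : a ∈ Set.range g
      · obtain ⟨i, rfl⟩ := ha
        exact Submodule.subset_span ⟨i, rfl⟩
      · rw [hzero a ha]
        exact (Submodule.span K _).zero_mem
    · rw [Submodule.span_le]
      rintro _ ⟨i, rfl⟩
      exact Submodule.subset_span ⟨g i, rfl⟩
  rw [Matrix.rank_eq_finrank_span_row, show M.row = M from rfl, hspan,
    ← show (M.submatrix g id).row = M.submatrix g id from rfl,
    ← Matrix.rank_eq_finrank_span_row (M.submatrix g id), h2]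

/-- If `(u−1)(v−1) > w−1`, `u ≤ m`, `v ≤ n` and `(u−1)(v−1) ≤ r`, there exists an `m×n×r`
array whose first flattening has rank `u−1`, second flattening has rank `v−1`, and third
flattening has rank strictly greater than `w−1`. -/
theorem stmt_5 {K : Type*} [Field K] (m n r u v w : ℕ)
    (hm : 1 ≤ m) (hn : 1 ≤ n) (hr : 1 ≤ r) (hu : 2 ≤ u) (hv : 2 ≤ v) (hw : 2 ≤ w)
    (h : w - 1 < (u - 1) * (v - 1)) (hum : u ≤ m) (hvn : v ≤ n)
    (hle : (u - 1) * (v - 1) ≤ r) :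
    ∃ T : Fin m → Fin n → Fin r → K,
      (Matrix.of fun i (p : Fin n × Fin r) => T i p.1 p.2).rank = u - 1 ∧
      (Matrix.of fun j (p : Fin m × Fin r) => T p.1 j p.2).rank = v - 1 ∧
      w - 1 < (Matrix.of fun k (p : Fin m × Fin n) => T p.1 p.2 k).rank := by
  classical
  set T : Fin m → Fin n → Fin r → K := fun i j k =>
    if i.1 < u - 1 ∧ j.1 < v - 1 ∧ k.1 = i.1 * (v - 1) + j.1 then 1 else 0 with hT
  refine ⟨T, ?_, ?_, ?_⟩
  · -- first flattening, rank u - 1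
    refine rank_partialPerm _ (u - 1)
      (fun i => ⟨i.1, by omega⟩)
      (fun i => (⟨0, by omega⟩, ⟨i.1 * (v - 1), by
        have : i.1 * (v - 1) + (v-1) ≤ (u-1) * (v-1) := by
          have : i.1 + 1 ≤ u - 1 := i.2
          calc i.1 * (v-1) + (v-1) = (i.1+1) * (v-1) := by ring
            _ ≤ (u-1)*(v-1) := Nat.mul_le_mul_right _ this
        omega⟩)) ?_ ?_
    · intro i j
      simp only [Matrix.of_apply, hT]
      have hv1 : 0 < v - 1 := by omega
      by_cases hij : i = j
      · subst hij
        rw [if_pos ⟨i.2, hv1, (add_zero _).symm⟩, if_pos rfl]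
      · have hne : j.1 * (v-1) ≠ i.1 * (v-1) + 0 := by
          rw [add_zero]
          intro hc
          exact hij (Fin.ext (Nat.eq_of_mul_eq_mul_right hv1 hc.symm))
        rw [if_neg (fun hc => hne hc.2.2), if_neg hij]
    · intro a ha
      funext p
      simp only [Matrix.of_apply, hT, Pi.zero_apply, ite_eq_right_iff]
      rintro ⟨h1, -, -⟩
      exact absurd ⟨⟨a.1, h1⟩, rfl⟩ ha
  · -- second flattening, rank v - 1
    refine rank_partialPerm _ (v - 1)
      (fun j => ⟨j.1, by omega⟩)
      (fun j => (⟨0, by omega⟩, ⟨j.1, by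
        have := j.2
        have : v - 1 ≤ (u-1)*(v-1) := Nat.le_mul_of_pos_left _ (by omega)
        omega⟩)) ?_ ?_
    · intro j j'
      simp only [Matrix.of_apply, hT]
      by_cases hjj : j = j'
      · subst hjj
        rw [if_pos ⟨by omega, j.2, by simp⟩, if_pos rfl]
      · have hne : j'.1 ≠ 0 * (v-1) + j.1 := by
          rw [zero_mul, zero_add]
          exact fun hc => hjj (Fin.ext hc.symm)
        rw [if_neg (fun hc => hne hc.2.2), if_neg hjj]
    · intro a ha
      funext p
      simp only [Matrix.of_apply, hT, Pi.zero_apply, ite_eq_right_iff]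
      rintro ⟨-, h2, -⟩
      exact absurd ⟨⟨a.1, h2⟩, rfl⟩ ha
  · -- third flattening, rank (u-1)*(v-1) > w - 1
    have key : (Matrix.of fun k (p : Fin m × Fin n) => T p.1 p.2 k).rank = (u-1)*(v-1) := by
      have hv1 : 0 < v - 1 := by omega
      refine rank_partialPerm _ ((u-1)*(v-1))
        (fun k => ⟨k.1, by omega⟩)
        (fun k => (⟨k.1 / (v-1), by
            have hk : (k : ℕ) < (v-1) * (u-1) := by
              exact lt_of_lt_of_le k.2 (le_of_eq (Nat.mul_comm _ _))
            have := Nat.div_lt_of_lt_mul hk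
            omega⟩,
          ⟨k.1 % (v-1), by
            have := Nat.mod_lt k.1 hv1
            omega⟩)) ?_ ?_
      · intro k k'
        simp only [Matrix.of_apply, hT]
        have hdiv : k'.1 / (v-1) < u - 1 := by
          have hk : (k' : ℕ) < (v-1) * (u-1) := by
            exact lt_of_lt_of_le k'.2 (le_of_eq (Nat.mul_comm _ _))
          exact Nat.div_lt_of_lt_mul hk
        have hmod : k'.1 % (v-1) < v - 1 := Nat.mod_lt k'.1 hv1
        have heq : (k'.1 / (v-1)) * (v-1) + k'.1 % (v-1) = k'.1 := by
          rw [Nat.mul_comm]; exact Nat.div_add_mod k'.1 (v-1)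
        by_cases hkk : k = k'
        · subst hkk
          rw [if_pos ⟨hdiv, hmod, heq.symm⟩, if_pos rfl]
        · have hne : k.1 ≠ k'.1 / (v-1) * (v-1) + k'.1 % (v-1) := by
            rw [heq]; exact fun hc => hkk (Fin.ext hc)
          rw [if_neg (fun hc => hne hc.2.2), if_neg hkk]
      · intro a ha
        funext p
        simp only [Matrix.of_apply, hT, Pi.zero_apply, ite_eq_right_iff]
        rintro ⟨h1, h2, h3⟩
        refine absurd ⟨⟨a.1, ?_⟩, rfl⟩ ha
        calc a.1 = p.1.1 * (v-1) + p.2.1 := h3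
          _ < (p.1.1 + 1) * (v-1) := by rw [add_mul, one_mul]; omega
          _ ≤ (u-1)*(v-1) := Nat.mul_le_mul_right _ h1
    omega
end

section
/- Buchberger chain criterion: a finite set G of nonzero polynomials in K[x_1,...,x_n] with a fixed monomial order is a Gröbner basis of the ideal it generates if and only if for all M, N ∈ G there exist M_0 = M, M_1, ..., M_k = N in G such that (1) LM(M_i) divides lcm(LM(M), LM(N)) for all i, and (2) for each i, the S-polynomial S(M_{i−1}, M_i) can be written as Σ_j a_j P_j with a_j monomials, P_j ∈ G, and LM(a_j P_j) < lcm(LM(M_{i−1}), LM(M_i)) for all j. -/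
open MvPolynomial

/-- Leading exponent of a multivariate polynomial w.r.t. a monomial order. -/
noncomputable def mdeg {σ : Type*} (mo : MonomialOrder σ) {K : Type*} [CommSemiring K]
    (f : MvPolynomial σ K) : σ →₀ ℕ :=
  mo.toSyn.symm (f.support.sup fun e => mo.toSyn e)

/-- Leading coefficient w.r.t. a monomial order. -/
noncomputable def lcoeff {σ : Type*} (mo : MonomialOrder σ) {K : Type*} [CommSemiring K]
    (f : MvPolynomial σ K) : K :=
  f.coeff (mdeg mo f)

/-- The S-polynomial `S(f,g) = (L/LT f)·f − (L/LT g)·g` where `L = lcm(LM f, LM g)`. -/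
noncomputable def spoly {σ : Type*} (mo : MonomialOrder σ) {K : Type*} [Field K]
    (f g : MvPolynomial σ K) : MvPolynomial σ K :=
  monomial (mdeg mo f ⊔ mdeg mo g - mdeg mo f) (lcoeff mo f)⁻¹ * f -
    monomial (mdeg mo f ⊔ mdeg mo g - mdeg mo g) (lcoeff mo g)⁻¹ * g

/-- `G` is a Gröbner basis (of the ideal it generates) w.r.t. `mo`. -/
def IsGroebnerBasis {σ K : Type*} [Field K] (mo : MonomialOrder σ)
    (G : Set (MvPolynomial σ K)) : Prop :=
  ∀ f ∈ Ideal.span G, f ≠ 0 → ∃ g ∈ G, g ≠ 0 ∧ mdeg mo g ≤ mdeg mo f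

namespace GBAux

variable {σ K : Type*} [Field K] (mo : MonomialOrder σ)

lemma toSyn_mdeg (f : MvPolynomial σ K) :
    mo.toSyn (mdeg mo f) = f.support.sup fun e => mo.toSyn e := by
  simp [mdeg]

lemma le_mdeg {f : MvPolynomial σ K} {d : σ →₀ ℕ} (hd : d ∈ f.support) :
    mo.toSyn d ≤ mo.toSyn (mdeg mo f) := by
  rw [toSyn_mdeg]; exact Finset.le_sup hd

lemma mdeg_mem_support {f : MvPolynomial σ K} (hf : f ≠ 0) : mdeg mo f ∈ f.support := by
  obtain ⟨d, hd, hsup⟩ := Finset.exists_mem_eq_sup f.support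
    (MvPolynomial.support_nonempty.2 hf) (fun e => mo.toSyn e)
  have : mdeg mo f = d := by rw [mdeg, hsup]; exact mo.toSyn.symm_apply_apply d
  rwa [this]

lemma lcoeff_ne_zero {f : MvPolynomial σ K} (hf : f ≠ 0) : lcoeff mo f ≠ 0 := by
  have := mdeg_mem_support mo hf
  rwa [MvPolynomial.mem_support_iff] at this

lemma mdeg_lt_of_forall {f : MvPolynomial σ K} {b : mo.syn} (hf : f ≠ 0)
    (h : ∀ d ∈ f.support, mo.toSyn d < b) : mo.toSyn (mdeg mo f) < b :=
  h _ (mdeg_mem_support mo hf)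

lemma support_monomial_mul_le {a : σ →₀ ℕ} {c : K} {f : MvPolynomial σ K} {d : σ →₀ ℕ}
    (hd : d ∈ (monomial a c * f).support) :
    mo.toSyn d ≤ mo.toSyn (a + mdeg mo f) := by
  rw [MvPolynomial.mem_support_iff, MvPolynomial.coeff_monomial_mul'] at hd
  split_ifs at hd with h
  · have h2 : d - a ∈ f.support := by
      rw [MvPolynomial.mem_support_iff]; intro h3; rw [h3, mul_zero] at hd; exact hd rfl
    have := le_mdeg mo h2
    calc mo.toSyn d = mo.toSyn (a + (d - a)) := by rw [add_tsub_cancel_of_le h]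
    _ ≤ mo.toSyn (a + mdeg mo f) := by
        rw [map_add, map_add]; exact add_le_add_right this _
  · exact absurd rfl hd

lemma coeff_monomial_mul_top (a : σ →₀ ℕ) (c : K) (f : MvPolynomial σ K) :
    MvPolynomial.coeff (a + mdeg mo f) (monomial a c * f) = c * lcoeff mo f :=
  MvPolynomial.coeff_monomial_mul _ _ _ _


def HasRep (G : Finset (MvPolynomial σ K)) (f : MvPolynomial σ K) (p : mo.syn → Prop) : Prop :=
  ∃ (t : ℕ) (a : Fin t → (σ →₀ ℕ)) (co : Fin t → K) (P : Fin t → MvPolynomial σ K),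
    (∀ j, P j ∈ G) ∧ f = ∑ j, monomial (a j) (co j) * P j ∧
    ∀ j, p (mo.toSyn (a j + mdeg mo (P j)))

variable {mo} {G : Finset (MvPolynomial σ K)} {p q : mo.syn → Prop}

lemma HasRep.zero : HasRep mo G 0 p :=
  ⟨0, Fin.elim0, Fin.elim0, Fin.elim0, fun j => j.elim0, by simp, fun j => j.elim0⟩

lemma HasRep.mono {f : MvPolynomial σ K} (h : HasRep mo G f p) (hpq : ∀ x, p x → q x) :
    HasRep mo G f q := by
  obtain ⟨t, a, co, P, hP, hf, hb⟩ := h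
  exact ⟨t, a, co, P, hP, hf, fun j => hpq _ (hb j)⟩

lemma HasRep.add {f g : MvPolynomial σ K} (hf : HasRep mo G f p) (hg : HasRep mo G g p) :
    HasRep mo G (f + g) p := by
  obtain ⟨t1, a1, c1, P1, hP1, h1, b1⟩ := hf
  obtain ⟨t2, a2, c2, P2, hP2, h2, b2⟩ := hg
  refine ⟨t1 + t2, Fin.append a1 a2, Fin.append c1 c2, Fin.append P1 P2, ?_, ?_, ?_⟩
  · intro j
    refine Fin.addCases (fun i => ?_) (fun i => ?_) j
    · rw [Fin.append_left]; exact hP1 i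
    · rw [Fin.append_right]; exact hP2 i
  · rw [Fin.sum_univ_add]
    simp only [Fin.append_left, Fin.append_right]
    rw [← h1, ← h2]
  · intro j
    refine Fin.addCases (fun i => ?_) (fun i => ?_) j
    · rw [Fin.append_left, Fin.append_left]; exact b1 i
    · rw [Fin.append_right, Fin.append_right]; exact b2 i

lemma HasRep.single {a : σ →₀ ℕ} {c : K} {g : MvPolynomial σ K} (hg : g ∈ G)
    (hp : p (mo.toSyn (a + mdeg mo g))) : HasRep mo G (monomial a c * g) p :=
  ⟨1, fun _ => a, fun _ => c, fun _ => g, fun _ => hg, by simp, fun _ => hp⟩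

lemma HasRep.finsetSum {ι : Type*} {s : Finset ι} {F : ι → MvPolynomial σ K}
    (h : ∀ i ∈ s, HasRep mo G (F i) p) : HasRep mo G (∑ i ∈ s, F i) p := by
  classical
  induction s using Finset.induction_on with
  | empty => simpa using HasRep.zero
  | insert _ _ hni ih =>
    rw [Finset.sum_insert hni]
    exact (h _ (Finset.mem_insert_self _ _)).add
      (ih fun i hi => h i (Finset.mem_insert_of_mem hi))

lemma HasRep.cmul {f : MvPolynomial σ K} (c : K) (h : HasRep mo G f p) :
    HasRep mo G (MvPolynomial.C c * f) p := by
  obtain ⟨t, a, co, P, hP, hf, hb⟩ := h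
  refine ⟨t, a, fun j => c * co j, P, hP, ?_, hb⟩
  rw [hf, Finset.mul_sum]
  refine Finset.sum_congr rfl fun j _ => ?_
  rw [← mul_assoc, MvPolynomial.C_mul_monomial]

lemma HasRep.monomial_mul {f : MvPolynomial σ K} (b : σ →₀ ℕ) (c : K) (h : HasRep mo G f p) :
    HasRep mo G (monomial b c * f) (fun x => ∃ y, p y ∧ x = mo.toSyn b + y) := by
  obtain ⟨t, a, co, P, hP, hf, hb⟩ := h
  refine ⟨t, fun j => b + a j, fun j => c * co j, P, hP, ?_, ?_⟩
  · rw [hf, Finset.mul_sum]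
    refine Finset.sum_congr rfl fun j _ => ?_
    rw [← mul_assoc, MvPolynomial.monomial_mul]
  · intro j
    exact ⟨mo.toSyn (a j + mdeg mo (P j)), hb j, by rw [add_assoc, map_add]⟩

lemma HasRep.sub {f g : MvPolynomial σ K} (hf : HasRep mo G f p) (hg : HasRep mo G g p) :
    HasRep mo G (f - g) p := by
  have := hf.add (hg.cmul (-1))
  simpa [sub_eq_add_neg] using this

lemma HasRep.mdeg_le {f : MvPolynomial σ K} {δ : mo.syn} (h : HasRep mo G f (· ≤ δ)) :
    mo.toSyn (mdeg mo f) ≤ δ := by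
  obtain ⟨t, a, co, P, hP, hf, hb⟩ := h
  have : mo.toSyn (mdeg mo f) = f.support.sup fun e => mo.toSyn e := by simp [mdeg]
  rw [this]
  refine Finset.sup_le fun d hd => ?_
  rw [MvPolynomial.mem_support_iff, hf, MvPolynomial.coeff_sum] at hd
  obtain ⟨j, -, hj⟩ := Finset.exists_ne_zero_of_sum_ne_zero hd
  exact le_trans (support_monomial_mul_le mo (MvPolynomial.mem_support_iff.2 hj)) (hb j)



lemma hasRep_of_mem_span {G : Finset (MvPolynomial σ K)} {f : MvPolynomial σ K}
    (hf : f ∈ Ideal.span (G : Set (MvPolynomial σ K))) :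
    HasRep mo G f (fun _ => True) := by
  refine Submodule.span_induction (p := fun x _ => HasRep mo G x (fun _ => True))
    (fun g hg => ?_) HasRep.zero (fun x y _ _ hx hy => hx.add hy)
    (fun r x _ hx => ?_) hf
  · have h1 : g = monomial 0 1 * g := by simp
    show HasRep mo G g _
    rw [h1]
    exact HasRep.single hg trivial
  · show HasRep mo G (r • x) _
    have h2 : r • x = ∑ d ∈ r.support, monomial d (MvPolynomial.coeff d r) * x := by
      rw [smul_eq_mul]
      nth_rewrite 1 [MvPolynomial.as_sum r]
      rw [Finset.sum_mul]
    rw [h2]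
    refine HasRep.finsetSum fun d _ => ?_
    exact (HasRep.monomial_mul d _ hx).mono (fun _ _ => trivial)

lemma top_coeff_cancel {f g : MvPolynomial σ K}
    (hf : f ≠ 0) (hg : g ≠ 0) (hle : mdeg mo g ≤ mdeg mo f) :
    let T := monomial (mdeg mo f - mdeg mo g) (lcoeff mo f * (lcoeff mo g)⁻¹) * g
    MvPolynomial.coeff (mdeg mo f) (f - T) = 0 ∧
      (∀ d ∈ (f - T).support, mo.toSyn d < mo.toSyn (mdeg mo f)) := by
  classical
  intro T
  have htop : MvPolynomial.coeff (mdeg mo f) T = lcoeff mo f := by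
    have h1 : mdeg mo f = (mdeg mo f - mdeg mo g) + mdeg mo g := (tsub_add_cancel_of_le hle).symm
    rw [h1]
    rw [coeff_monomial_mul_top]
    field_simp [lcoeff_ne_zero mo hg]
  have hc : MvPolynomial.coeff (mdeg mo f) (f - T) = 0 := by
    rw [MvPolynomial.coeff_sub, htop]
    simp [_root_.lcoeff]
  refine ⟨hc, fun d hd => ?_⟩
  have hdle : mo.toSyn d ≤ mo.toSyn (mdeg mo f) := by
    have hsub : (f - T).support ⊆ f.support ∪ T.support := by
      intro x hx
      rw [MvPolynomial.mem_support_iff, MvPolynomial.coeff_sub] at hx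
      rw [Finset.mem_union, MvPolynomial.mem_support_iff, MvPolynomial.mem_support_iff]
      by_contra h
      push_neg at h
      rw [h.1, h.2, sub_zero] at hx
      exact hx rfl
    rcases Finset.mem_union.1 (hsub hd) with h | h
    · exact le_mdeg mo h
    · have := support_monomial_mul_le mo h
      rwa [tsub_add_cancel_of_le hle] at this
  rcases lt_or_eq_of_le hdle with h | h
  · exact h
  · exfalso
    have : d = mdeg mo f := mo.toSyn.injective h
    rw [this, MvPolynomial.mem_support_iff] at hd
    exact hd hc

lemma rep_of_GB {G : Finset (MvPolynomial σ K)}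
    (hGB : IsGroebnerBasis mo (G : Set (MvPolynomial σ K))) :
    ∀ f ∈ Ideal.span (G : Set (MvPolynomial σ K)),
      HasRep mo G f (· ≤ mo.toSyn (mdeg mo f)) := by
  have main : ∀ δ : mo.syn, ∀ f ∈ Ideal.span (G : Set (MvPolynomial σ K)),
      mo.toSyn (mdeg mo f) = δ → HasRep mo G f (· ≤ mo.toSyn (mdeg mo f)) := by
    intro δ
    induction δ using WellFoundedLT.induction with
    | _ δ IH =>
      intro f hf hδ
      by_cases hf0 : f = 0
      · rw [hf0]; exact HasRep.zero
      obtain ⟨g, hgG, hg0, hle⟩ := hGB f hf hf0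
      set T := monomial (mdeg mo f - mdeg mo g) (lcoeff mo f * (lcoeff mo g)⁻¹) * g with hT
      obtain ⟨hc, hlt⟩ := top_coeff_cancel (mo := mo) hf0 hg0 hle
      have hTrep : HasRep mo G T (· ≤ mo.toSyn (mdeg mo f)) := by
        refine HasRep.single hgG ?_
        rw [tsub_add_cancel_of_le hle]
      have hf' : f - T ∈ Ideal.span (G : Set (MvPolynomial σ K)) := by
        refine Submodule.sub_mem _ hf ?_
        exact Ideal.mul_mem_left _ _ (Ideal.subset_span hgG)
      by_cases hf'0 : f - T = 0
      · rw [sub_eq_zero] at hf'0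
        nth_rewrite 1 [hf'0]; exact hTrep
      · have hlt' : mo.toSyn (mdeg mo (f - T)) < δ := by
          rw [← hδ]
          exact mdeg_lt_of_forall mo hf'0 hlt
        have hrep' := IH _ hlt' (f - T) hf' rfl
        have hrep'' : HasRep mo G (f - T) (· ≤ mo.toSyn (mdeg mo f)) := by
          refine hrep'.mono fun x hx => le_trans hx (le_of_lt ?_)
          rw [hδ]; exact hlt'
        have hsum := hrep''.add hTrep
        rwa [sub_add_cancel] at hsum
  exact fun f hf => main _ f hf rfl

lemma spoly_support_lt {f g : MvPolynomial σ K} (hf : f ≠ 0) (hg : g ≠ 0) :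
    ∀ d ∈ (spoly mo f g).support, mo.toSyn d < mo.toSyn (mdeg mo f ⊔ mdeg mo g) := by
  classical
  intro d hd
  set L := mdeg mo f ⊔ mdeg mo g with hL
  have hLf : mdeg mo f ≤ L := le_sup_left
  have hLg : mdeg mo g ≤ L := le_sup_right
  have hcoeff : MvPolynomial.coeff L (spoly mo f g) = 0 := by
    rw [spoly, MvPolynomial.coeff_sub]
    have h1 : MvPolynomial.coeff L (monomial (L - mdeg mo f) (lcoeff mo f)⁻¹ * f)
        = (lcoeff mo f)⁻¹ * lcoeff mo f := by
      nth_rewrite 1 [show L = (L - mdeg mo f) + mdeg mo f from (tsub_add_cancel_of_le hLf).symm]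
      exact coeff_monomial_mul_top mo _ _ _
    have h2 : MvPolynomial.coeff L (monomial (L - mdeg mo g) (lcoeff mo g)⁻¹ * g)
        = (lcoeff mo g)⁻¹ * lcoeff mo g := by
      nth_rewrite 1 [show L = (L - mdeg mo g) + mdeg mo g from (tsub_add_cancel_of_le hLg).symm]
      exact coeff_monomial_mul_top mo _ _ _
    rw [h1, h2, inv_mul_cancel₀ (lcoeff_ne_zero mo hf), inv_mul_cancel₀ (lcoeff_ne_zero mo hg),
      sub_self]
  have hdle : mo.toSyn d ≤ mo.toSyn L := by
    have hsub : (spoly mo f g).support ⊆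
        (monomial (L - mdeg mo f) (lcoeff mo f)⁻¹ * f).support ∪
        (monomial (L - mdeg mo g) (lcoeff mo g)⁻¹ * g).support := by
      intro x hx
      rw [MvPolynomial.mem_support_iff, spoly, MvPolynomial.coeff_sub] at hx
      rw [Finset.mem_union, MvPolynomial.mem_support_iff, MvPolynomial.mem_support_iff]
      by_contra h
      push_neg at h
      rw [← hL, h.1, h.2, sub_zero] at hx
      exact hx rfl
    rcases Finset.mem_union.1 (hsub hd) with h | h
    · have := support_monomial_mul_le mo h
      rwa [tsub_add_cancel_of_le hLf] at this
    · have := support_monomial_mul_le mo h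
      rwa [tsub_add_cancel_of_le hLg] at this
  rcases lt_or_eq_of_le hdle with h | h
  · exact h
  · exfalso
    have : d = L := mo.toSyn.injective h
    rw [this, MvPolynomial.mem_support_iff] at hd
    exact hd hcoeff

lemma monomial_mul_spoly {f g : MvPolynomial σ K} {e : σ →₀ ℕ}
    (he : mdeg mo f ⊔ mdeg mo g ≤ e) :
    monomial (e - (mdeg mo f ⊔ mdeg mo g)) (1 : K) * spoly mo f g =
      monomial (e - mdeg mo f) (lcoeff mo f)⁻¹ * f -
        monomial (e - mdeg mo g) (lcoeff mo g)⁻¹ * g := by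
  set L := mdeg mo f ⊔ mdeg mo g with hL
  rw [spoly, mul_sub, ← mul_assoc, ← mul_assoc, MvPolynomial.monomial_mul,
    MvPolynomial.monomial_mul, one_mul, one_mul,
    tsub_add_tsub_cancel he le_sup_left, tsub_add_tsub_cancel he le_sup_right]

lemma chain_rep_aux {G : Finset (MvPolynomial σ K)} (bigL : σ →₀ ℕ) :
    ∀ (k : ℕ) (c : Fin (k + 1) → MvPolynomial σ K),
      (∀ i, c i ∈ G) → (∀ i, mdeg mo (c i) ≤ bigL) →
      (∀ i : Fin k, HasRep mo G (spoly mo (c i.castSucc) (c i.succ))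
          (· < mo.toSyn (mdeg mo (c i.castSucc) ⊔ mdeg mo (c i.succ)))) →
      ∀ e : σ →₀ ℕ, bigL ≤ e →
      HasRep mo G (monomial (e - mdeg mo (c 0)) (lcoeff mo (c 0))⁻¹ * c 0 -
        monomial (e - mdeg mo (c (Fin.last k))) (lcoeff mo (c (Fin.last k)))⁻¹ * c (Fin.last k))
        (· < mo.toSyn e) := by
  intro k
  induction k with
  | zero =>
    intro c _ _ _ e _
    have h0 : (Fin.last 0 : Fin 1) = 0 := rfl
    rw [h0, sub_self]
    exact HasRep.zero
  | succ k IH =>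
    intro c hcG hcL hlink e he
    have hL01 : mdeg mo (c 0) ⊔ mdeg mo (c 1) ≤ e :=
      le_trans (sup_le (hcL 0) (hcL 1)) he
    -- first link
    have hfirst : HasRep mo G (monomial (e - mdeg mo (c 0)) (lcoeff mo (c 0))⁻¹ * c 0 -
        monomial (e - mdeg mo (c 1)) (lcoeff mo (c 1))⁻¹ * c 1) (· < mo.toSyn e) := by
      have h0 := hlink 0
      have hcast : (0 : Fin (k + 1)).castSucc = (0 : Fin (k + 2)) := rfl
      have hsucc : (0 : Fin (k + 1)).succ = (1 : Fin (k + 2)) := rfl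
      rw [hcast, hsucc] at h0
      have hsh := h0.monomial_mul (e - (mdeg mo (c 0) ⊔ mdeg mo (c 1))) (1 : K)
      rw [monomial_mul_spoly (mo := mo) hL01] at hsh
      refine hsh.mono fun x hx => ?_
      obtain ⟨y, hy, rfl⟩ := hx
      calc mo.toSyn (e - (mdeg mo (c 0) ⊔ mdeg mo (c 1))) + y
          < mo.toSyn (e - (mdeg mo (c 0) ⊔ mdeg mo (c 1))) +
            mo.toSyn (mdeg mo (c 0) ⊔ mdeg mo (c 1)) := by exact add_lt_add_right hy _
        _ = mo.toSyn e := by rw [← map_add, tsub_add_cancel_of_le hL01]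
    -- the rest of the chain
    have hrest : HasRep mo G (monomial (e - mdeg mo (c 1)) (lcoeff mo (c 1))⁻¹ * c 1 -
        monomial (e - mdeg mo (c (Fin.last (k + 1))))
          (lcoeff mo (c (Fin.last (k + 1))))⁻¹ * c (Fin.last (k + 1))) (· < mo.toSyn e) := by
      have := IH (fun i => c i.succ) (fun i => hcG i.succ) (fun i => hcL i.succ)
        (fun i => by
          have h := hlink i.succ
          rw [← Fin.succ_castSucc] at h
          exact h) e he
      simp only [Fin.succ_last] at this
      exact this
    have := hfirst.add hrest
    rwa [sub_add_sub_cancel] at this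

lemma merge_identity {a0 a1 : σ →₀ ℕ} {c0 c1 l0 l1 : K} (h0 : l0 ≠ 0)
    (A B : MvPolynomial σ K) :
    monomial a0 c0 * A + monomial a1 c1 * B =
      MvPolynomial.C (c0 * l0) * (monomial a0 l0⁻¹ * A - monomial a1 l1⁻¹ * B) +
        monomial a1 (c1 + c0 * l0 * l1⁻¹) * B := by
  rw [mul_sub, ← mul_assoc, ← mul_assoc, MvPolynomial.C_mul_monomial,
    MvPolynomial.C_mul_monomial]
  have e0 : c0 * l0 * l0⁻¹ = c0 := by field_simp
  have e1 : monomial a1 (c1 + c0 * l0 * l1⁻¹) =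
      monomial a1 c1 + monomial a1 (c0 * l0 * l1⁻¹) := by
    rw [← map_add]
  rw [e0, e1, add_mul]
  ring

lemma syzygy {G : Finset (MvPolynomial σ K)} (hG0 : (0 : MvPolynomial σ K) ∉ G)
    (key : ∀ M ∈ G, ∀ N ∈ G, ∀ e : σ →₀ ℕ, mdeg mo M ⊔ mdeg mo N ≤ e →
      HasRep mo G (monomial (e - mdeg mo M) (lcoeff mo M)⁻¹ * M -
        monomial (e - mdeg mo N) (lcoeff mo N)⁻¹ * N) (· < mo.toSyn e)) :
    ∀ (m : ℕ) (e : σ →₀ ℕ) (a : Fin m → (σ →₀ ℕ)) (co : Fin m → K)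
      (P : Fin m → MvPolynomial σ K),
      (∀ j, P j ∈ G) → (∀ j, a j + mdeg mo (P j) = e) →
      (∑ j, co j * lcoeff mo (P j)) = 0 →
      HasRep mo G (∑ j, monomial (a j) (co j) * P j) (· < mo.toSyn e) := by
  classical
  intro m
  induction m with
  | zero =>
    intro e a co P _ _ _
    rw [Finset.univ_eq_empty, Finset.sum_empty]
    exact HasRep.zero
  | succ n IH =>
    intro e a co P hPG hae hsum
    have hP0 : ∀ j, P j ≠ 0 := fun j h => hG0 (h ▸ hPG j)
    match n, a, co, P, hPG, hae, hsum, hP0, IH with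
    | 0, a, co, P, hPG, hae, hsum, hP0, IH =>
      rw [Fin.sum_univ_one] at hsum ⊢
      have : co 0 = 0 := by
        rcases mul_eq_zero.1 hsum with h | h
        · exact h
        · exact absurd h (lcoeff_ne_zero mo (hP0 0))
      rw [this, MvPolynomial.monomial_zero, zero_mul]
      exact HasRep.zero
    | (k + 1), a, co, P, hPG, hae, hsum, hP0, IH =>
      set l0 := lcoeff mo (P 0) with hl0
      set l1 := lcoeff mo (P 1) with hl1
      have hl0ne : l0 ≠ 0 := lcoeff_ne_zero mo (hP0 0)
      have hl1ne : l1 ≠ 0 := lcoeff_ne_zero mo (hP0 1)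
      set a' : Fin (k + 1) → (σ →₀ ℕ) := fun j => a j.succ with ha'
      set P' : Fin (k + 1) → MvPolynomial σ K := fun j => P j.succ with hP'
      set co' : Fin (k + 1) → K :=
        Function.update (fun j => co (Fin.succ j)) 0 (co 1 + co 0 * l0 * l1⁻¹) with hco'
      have hco'0 : co' 0 = co 1 + co 0 * l0 * l1⁻¹ := by
        rw [hco']; exact Function.update_self _ _ _
      have hco's : ∀ j : Fin k, co' j.succ = co j.succ.succ := by
        intro j
        rw [hco', Function.update_of_ne (Fin.succ_ne_zero j)]
      -- condition (B)
      have hsum' : (∑ j, co' j * lcoeff mo (P' j)) = 0 := by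
        rw [Fin.sum_univ_succ]
        rw [Fin.sum_univ_succ, Fin.sum_univ_succ] at hsum
        simp only [show (Fin.succ 0 : Fin (k + 2)) = 1 from rfl] at hsum
        have hP'0 : P' 0 = P 1 := rfl
        have hkey2 : co' 0 * lcoeff mo (P' 0) = co 0 * l0 + co 1 * l1 := by
          rw [hco'0, hP'0, ← hl1]
          field_simp
          ring
        have hrest : ∀ j : Fin k, co' j.succ * lcoeff mo (P' j.succ) =
            co j.succ.succ * lcoeff mo (P j.succ.succ) := by
          intro j; rw [hco's]
        calc co' 0 * lcoeff mo (P' 0) + ∑ j : Fin k, co' j.succ * lcoeff mo (P' j.succ)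
            = (co 0 * l0 + co 1 * l1) +
              ∑ j : Fin k, co j.succ.succ * lcoeff mo (P j.succ.succ) := by
              rw [hkey2]
              congr 1
          _ = 0 := by linear_combination hsum
      -- condition (C)
      have hae' : ∀ j, a' j + mdeg mo (P' j) = e := fun j => hae j.succ
      have hPG' : ∀ j, P' j ∈ G := fun j => hPG j.succ
      have hIH := IH e a' co' P' hPG' hae' hsum'
      -- the S-polynomial part
      have hM0 : mdeg mo (P 0) ⊔ mdeg mo (P 1) ≤ e := by
        refine sup_le ?_ ?_
        · rw [← hae 0]; exact le_add_self
        · rw [← hae 1]; exact le_add_self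
      have ha0 : a 0 = e - mdeg mo (P 0) := eq_tsub_of_add_eq (hae 0)
      have ha1 : a 1 = e - mdeg mo (P 1) := eq_tsub_of_add_eq (hae 1)
      have hkeyrep := (key (P 0) (hPG 0) (P 1) (hPG 1) e hM0).cmul (co 0 * l0)
      -- identity (A)
      have hA : (∑ j, monomial (a j) (co j) * P j) =
          MvPolynomial.C (co 0 * l0) *
            (monomial (e - mdeg mo (P 0)) l0⁻¹ * P 0 -
              monomial (e - mdeg mo (P 1)) l1⁻¹ * P 1) +
            ∑ j, monomial (a' j) (co' j) * P' j := by
        rw [Fin.sum_univ_succ, Fin.sum_univ_succ (f := fun j : Fin (k + 1) =>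
          monomial (a j.succ) (co j.succ) * P j.succ),
          Fin.sum_univ_succ (f := fun j : Fin (k + 1) =>
          monomial (a' j) (co' j) * P' j)]
        have hR : ∑ j : Fin k, monomial (a' j.succ) (co' j.succ) * P' j.succ =
            ∑ j : Fin k, monomial (a j.succ.succ) (co j.succ.succ) * P j.succ.succ := by
          refine Finset.sum_congr rfl fun j _ => ?_
          rw [hco's]
        rw [hR, ← add_assoc, ← add_assoc]
        congr 1
        have hP'0 : P' 0 = P 1 := rfl
        have ha'0 : a' 0 = a 1 := rfl
        rw [hP'0, ha'0, hco'0, ← ha0, ← ha1]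
        exact merge_identity hl0ne (P 0) (P 1)
      rw [hA]
      exact hkeyrep.add hIH


lemma HasRep.sup_bound {f : MvPolynomial σ K} {t : ℕ} {a : Fin t → (σ →₀ ℕ)} {co : Fin t → K}
    {P : Fin t → MvPolynomial σ K} (hPG : ∀ j, P j ∈ G)
    (hfeq : f = ∑ j, monomial (a j) (co j) * P j) :
    HasRep mo G f (· ≤ Finset.univ.sup (fun j => mo.toSyn (a j + mdeg mo (P j)))) := by
  have hb : ∀ j, mo.toSyn (a j + mdeg mo (P j)) ≤
      Finset.univ.sup (fun j => mo.toSyn (a j + mdeg mo (P j))) :=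
    fun j => Finset.le_sup (f := fun j => mo.toSyn (a j + mdeg mo (P j)))
      (Finset.mem_univ j)
  exact ⟨t, a, co, P, hPG, hfeq, hb⟩

end GBAux

/-- Buchberger's chain criterion: a finite set `G` of nonzero polynomials is a Gröbner basis
iff any two elements `M, N` of `G` are connected by a chain in `G` whose consecutive
S-polynomials admit representations with sufficiently small leading monomials. -/
theorem stmt_16 {σ K : Type*} [Field K] (mo : MonomialOrder σ)
    (G : Finset (MvPolynomial σ K)) (hG : (0 : MvPolynomial σ K) ∉ G) :
    IsGroebnerBasis mo (G : Set (MvPolynomial σ K)) ↔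
      ∀ M ∈ G, ∀ N ∈ G, ∃ (k : ℕ) (c : Fin (k + 1) → MvPolynomial σ K),
        c 0 = M ∧ c (Fin.last k) = N ∧ (∀ i, c i ∈ G) ∧
        (∀ i, mdeg mo (c i) ≤ mdeg mo M ⊔ mdeg mo N) ∧
        ∀ i : Fin k, ∃ (t : ℕ) (a : Fin t → (σ →₀ ℕ)) (co : Fin t → K)
            (P : Fin t → MvPolynomial σ K),
          (∀ j, P j ∈ G) ∧
          spoly mo (c i.castSucc) (c i.succ) = ∑ j, monomial (a j) (co j) * P j ∧
          ∀ j, mo.toSyn (a j + mdeg mo (P j)) <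
            mo.toSyn (mdeg mo (c i.castSucc) ⊔ mdeg mo (c i.succ)) := by
  classical
  constructor
  · -- forward direction
    intro hGB M hM N hN
    have hM0 : M ≠ 0 := fun h => hG (h ▸ hM)
    have hN0 : N ≠ 0 := fun h => hG (h ▸ hN)
    refine ⟨1, ![M, N], rfl, rfl, ?_, ?_, ?_⟩
    · intro i; fin_cases i
      · exact hM
      · exact hN
    · intro i; fin_cases i
      · exact le_sup_left
      · exact le_sup_right
    · intro i
      have hi : i = 0 := Subsingleton.elim i 0
      subst hi
      have hc1 : (![M, N] : Fin 2 → MvPolynomial σ K) (Fin.castSucc 0) = M := rfl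
      have hc2 : (![M, N] : Fin 2 → MvPolynomial σ K) (Fin.succ 0) = N := rfl
      rw [hc1, hc2]
      have hsp : spoly mo M N ∈ Ideal.span (G : Set (MvPolynomial σ K)) := by
        rw [spoly]
        exact Submodule.sub_mem _
          (Ideal.mul_mem_left _ _ (Ideal.subset_span hM))
          (Ideal.mul_mem_left _ _ (Ideal.subset_span hN))
      by_cases h0 : spoly mo M N = 0
      · exact ⟨0, Fin.elim0, Fin.elim0, Fin.elim0, fun j => j.elim0,
          by rw [h0]; simp, fun j => j.elim0⟩
      · have hrep := GBAux.rep_of_GB hGB _ hsp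
        have hlt : mo.toSyn (mdeg mo (spoly mo M N)) < mo.toSyn (mdeg mo M ⊔ mdeg mo N) :=
          GBAux.mdeg_lt_of_forall mo h0 (GBAux.spoly_support_lt (mo := mo) hM0 hN0)
        obtain ⟨t, a, co, P, h1, h2, h3⟩ := hrep.mono fun x hx => lt_of_le_of_lt hx hlt
        exact ⟨t, a, co, P, h1, h2, h3⟩
  · -- backward direction
    intro H f hf hf0
    -- key consequence of the chain hypothesis
    have key : ∀ M ∈ G, ∀ N ∈ G, ∀ e : σ →₀ ℕ, mdeg mo M ⊔ mdeg mo N ≤ e →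
        GBAux.HasRep mo G (monomial (e - mdeg mo M) (_root_.lcoeff mo M)⁻¹ * M -
          monomial (e - mdeg mo N) (_root_.lcoeff mo N)⁻¹ * N) (· < mo.toSyn e) := by
      intro M hM N hN e he
      obtain ⟨k, c, hc0, hclast, hcG, hcL, hlinks⟩ := H M hM N hN
      have := GBAux.chain_rep_aux (mdeg mo M ⊔ mdeg mo N) k c hcG hcL
        (fun i => hlinks i) e he
      rw [hc0, hclast] at this
      exact this
    -- choose a representation with minimal bound
    set S : Set mo.syn := {δ | GBAux.HasRep mo G f (· ≤ δ)} with hSdef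
    have hSne : S.Nonempty := by
      obtain ⟨t, a, co, P, h1, h2, h3⟩ := GBAux.hasRep_of_mem_span (mo := mo) hf
      exact ⟨Finset.univ.sup (fun j => mo.toSyn (a j + mdeg mo (P j))),
        GBAux.HasRep.sup_bound h1 h2⟩
    obtain ⟨δ, hδS, hmin⟩ := mo.wf.wf.has_min S hSne
    obtain ⟨t, a, co, P, hPG, hfeq, hb⟩ := hδS
    have ht : t ≠ 0 := by
      rintro rfl
      rw [Finset.univ_eq_empty, Finset.sum_empty] at hfeq
      exact hf0 hfeq
    have hune : (Finset.univ : Finset (Fin t)).Nonempty :=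
      ⟨⟨0, Nat.pos_of_ne_zero ht⟩, Finset.mem_univ _⟩
    set δ' := Finset.univ.sup (fun j => mo.toSyn (a j + mdeg mo (P j))) with hδ'def
    have hδ'S : δ' ∈ S := GBAux.HasRep.sup_bound hPG hfeq
    have hδ'eq : δ' = δ :=
      le_antisymm (Finset.sup_le fun j _ => hb j) (not_lt.1 (hmin δ' hδ'S))
    obtain ⟨j0, -, hj0⟩ := Finset.exists_mem_eq_sup Finset.univ hune
      (fun j => mo.toSyn (a j + mdeg mo (P j)))
    set e₀ := a j0 + mdeg mo (P j0) with he₀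
    have hδe : δ = mo.toSyn e₀ := by rw [← hδ'eq]; exact hj0
    have hble : ∀ j, mo.toSyn (a j + mdeg mo (P j)) ≤ mo.toSyn e₀ := fun j => hδe ▸ hb j
    set Top := Finset.univ.filter (fun j : Fin t => a j + mdeg mo (P j) = e₀) with hTop
    -- coefficient of f at e₀
    have hcoeff_top : ∀ j ∈ Top,
        MvPolynomial.coeff e₀ (monomial (a j) (co j) * P j) = co j * _root_.lcoeff mo (P j) := by
      intro j hj
      rw [hTop, Finset.mem_filter] at hj
      rw [← hj.2]
      exact GBAux.coeff_monomial_mul_top mo _ _ _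
    have hcoeff_not : ∀ j ∈ Finset.univ.filter (fun j : Fin t => ¬(a j + mdeg mo (P j) = e₀)),
        MvPolynomial.coeff e₀ (monomial (a j) (co j) * P j) = 0 := by
      intro j hj
      rw [Finset.mem_filter] at hj
      by_contra hne
      have hm : e₀ ∈ (monomial (a j) (co j) * P j).support := MvPolynomial.mem_support_iff.2 hne
      have h1 := GBAux.support_monomial_mul_le mo hm
      have h2 : mo.toSyn e₀ = mo.toSyn (a j + mdeg mo (P j)) := le_antisymm h1 (hble j)
      exact hj.2 (mo.toSyn.injective h2.symm)
    have hcoeff_f : MvPolynomial.coeff e₀ f = ∑ j ∈ Top, co j * _root_.lcoeff mo (P j) := by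
      rw [hfeq, MvPolynomial.coeff_sum]
      rw [← Finset.sum_filter_add_sum_filter_not Finset.univ
        (fun j : Fin t => a j + mdeg mo (P j) = e₀)]
      rw [Finset.sum_congr rfl hcoeff_not, Finset.sum_const_zero, add_zero]
      exact Finset.sum_congr rfl hcoeff_top
    by_cases hlam : (∑ j ∈ Top, co j * _root_.lcoeff mo (P j)) = 0
    · -- cancellation at the top: contradiction with minimality
      exfalso
      -- the top part has a strictly smaller representation, via the GBAux.syzygy lemma
      have htoprep : GBAux.HasRep mo G (∑ j ∈ Top, monomial (a j) (co j) * P j)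
          (· < mo.toSyn e₀) := by
        set m := Top.card with hm
        set em : Fin m ≃ {x // x ∈ Top} := Top.equivFin.symm with hem
        have htrans : ∀ (F : Fin t → MvPolynomial σ K),
            (∑ i, F ((em i) : Fin t)) = ∑ j ∈ Top, F j := by
          intro F
          rw [← Finset.sum_coe_sort Top F]
          exact Equiv.sum_comp em (fun j : {x // x ∈ Top} => F j)
        have htransK : ∀ (F : Fin t → K), (∑ i, F ((em i) : Fin t)) = ∑ j ∈ Top, F j := by
          intro F
          rw [← Finset.sum_coe_sort Top F]
          exact Equiv.sum_comp em (fun j : {x // x ∈ Top} => F j)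
        have hsyz := GBAux.syzygy (mo := mo) hG key m e₀ (fun i => a (em i)) (fun i => co (em i))
          (fun i => P (em i)) (fun i => hPG _)
          (fun i => (Finset.mem_filter.1 (em i).2).2)
          (by rw [htransK (fun j => co j * _root_.lcoeff mo (P j))]; exact hlam)
        rwa [htrans (fun j => monomial (a j) (co j) * P j)] at hsyz
      have hrestrep : GBAux.HasRep mo G
          (∑ j ∈ Finset.univ.filter (fun j : Fin t => ¬(a j + mdeg mo (P j) = e₀)),
            monomial (a j) (co j) * P j) (· < mo.toSyn e₀) := by
        refine GBAux.HasRep.finsetSum fun j hj => ?_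
        rw [Finset.mem_filter] at hj
        refine GBAux.HasRep.single (hPG j) ?_
        exact lt_of_le_of_ne (hble j) (fun h => hj.2 (mo.toSyn.injective h))
      have hfrep : GBAux.HasRep mo G f (· < mo.toSyn e₀) := by
        have := htoprep.add hrestrep
        rwa [Finset.sum_filter_add_sum_filter_not, ← hfeq] at this
      obtain ⟨t2, a2, co2, P2, h1, h2, h3⟩ := hfrep
      have ht2 : t2 ≠ 0 := by
        rintro rfl
        rw [Finset.univ_eq_empty, Finset.sum_empty] at h2
        exact hf0 h2
      have hune2 : (Finset.univ : Finset (Fin t2)).Nonempty :=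
        ⟨⟨0, Nat.pos_of_ne_zero ht2⟩, Finset.mem_univ _⟩
      set δ2 := Finset.univ.sup (fun j => mo.toSyn (a2 j + mdeg mo (P2 j))) with hδ2
      have hδ2S : δ2 ∈ S := GBAux.HasRep.sup_bound h1 h2
      obtain ⟨j2, -, hj2⟩ := Finset.exists_mem_eq_sup Finset.univ hune2
        (fun j => mo.toSyn (a2 j + mdeg mo (P2 j)))
      have : δ2 < δ := by
        calc δ2 = mo.toSyn (a2 j2 + mdeg mo (P2 j2)) := hj2
          _ < δ := by rw [hδe]; exact h3 j2
      exact hmin δ2 hδ2S this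
    · -- the leading term of f is divisible by some leading term in G
      obtain ⟨j, hjTop, hjne⟩ := Finset.exists_ne_zero_of_sum_ne_zero hlam
      have hfe : mdeg mo f = e₀ := by
        have h1 : e₀ ∈ f.support := by
          rw [MvPolynomial.mem_support_iff, hcoeff_f]
          exact hlam
        have h2 : mo.toSyn e₀ ≤ mo.toSyn (mdeg mo f) := GBAux.le_mdeg mo h1
        have h3 : mo.toSyn (mdeg mo f) ≤ δ := GBAux.HasRep.mdeg_le ⟨t, a, co, P, hPG, hfeq, hb⟩
        rw [hδe] at h3
        exact mo.toSyn.injective (le_antisymm h3 h2)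
      refine ⟨P j, hPG j, fun h => hG (h ▸ hPG j), ?_⟩
      rw [hfe]
      rw [hTop, Finset.mem_filter] at hjTop
      rw [← hjTop.2]
      exact le_add_self
end
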